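/- Probabilistic completeness of layered sampling: Let C ⊆ ℝ^d be a bounded measurable configuration space with μ(C) > 0, and suppose there exists a piecewise linear feasible path g from q_0 to the goal with M+1 equal segments and collision margin r > 0 (every point within distance r of the image of g is collision-free). Sample a layered graph G by drawing N points i.i.d. uniformly from C for each of the M middle layers, connecting all consecutive layers completely, with fixed endpoints q_0 and the goal. Then the probability that G contains a collision-free piecewise linear path from q_0 to the goal is at least 1 - M·exp(-(α_d·r^d/μ(C))·N). -/

import Mathlib

open MeasureTheory ProbabilityTheory Set

/-- The `M+2` breakpoints of a layered path: start, one point per middle layer, goal. -/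
def pathPts {E : Type*} {M : ℕ} (q0 goal : E) (Y : Fin M → E) : Fin (M + 2) → E :=
  Fin.cons q0 (Fin.snoc Y goal)

lemma seg_dist_lt {E : Type*} [NormedAddCommGroup E] [NormedSpace ℝ E]
    {a b a' b' : E} {r s : ℝ} (ha : dist a a' < r) (hb : dist b b' < r)
    (hs0 : 0 ≤ s) (hs1 : s ≤ 1) :
    dist (a + s • (b - a)) (a' + s • (b' - a')) < r := by
  rw [dist_eq_norm]
  have h : (a + s • (b - a)) - (a' + s • (b' - a')) = (1 - s) • (a - a') + s • (b - b') := by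
    module
  rw [h]
  have h1 : ‖(1 - s) • (a - a') + s • (b - b')‖ ≤ (1 - s) * ‖a - a'‖ + s * ‖b - b'‖ := by
    calc ‖(1 - s) • (a - a') + s • (b - b')‖ ≤ ‖(1 - s) • (a - a')‖ + ‖s • (b - b')‖ :=
          norm_add_le _ _
      _ = (1 - s) * ‖a - a'‖ + s * ‖b - b'‖ := by
          rw [norm_smul, norm_smul, Real.norm_eq_abs, Real.norm_eq_abs,
            abs_of_nonneg (by linarith), abs_of_nonneg hs0]
  rw [dist_eq_norm] at ha hb
  rcases lt_or_eq_of_le hs1 with h2 | h2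
  · nlinarith [mul_pos (by linarith : (0:ℝ) < 1 - s) (by linarith : (0:ℝ) < r - ‖a - a'‖),
      mul_nonneg hs0 (by linarith : (0:ℝ) ≤ r - ‖b - b'‖)]
  · subst h2
    nlinarith

/-- probabilistic completeness of layered sampling: if there is a piecewise
linear feasible path with `M+1` equal segments and collision margin `r` (every point within
distance `r` of its image lies in the free space `C \ Ccoll`), then sampling `N` points
i.i.d. uniformly from `C` per middle layer yields, with probability at least
`1 - M·exp(-(α_d r^d / μ(C)) N)`, a collision-free piecewise linear graph path from `q0` to
the goal. -/
theorem layered_sampling_probabilistic_completeness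
    {d : ℕ} (hd : 0 < d) (C Ccoll : Set (EuclideanSpace ℝ (Fin d)))
    (hCm : MeasurableSet C) (hCb : Bornology.IsBounded C)
    (hC0 : 0 < (volume C).toReal)
    (M N : ℕ) (hM : 0 < M) (hN : 0 < N)
    (q0 goal : EuclideanSpace ℝ (Fin d))
    (p : Fin (M + 2) → EuclideanSpace ℝ (Fin d))
    (hp0 : p 0 = q0) (hpl : p (Fin.last (M + 1)) = goal)
    (r : ℝ) (hr : 0 < r)
    (hmargin : ∀ x : EuclideanSpace ℝ (Fin d),
      (∃ m : Fin (M + 1), ∃ s ∈ Set.Icc (0 : ℝ) 1,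
        dist x (p m.castSucc + s • (p m.succ - p m.castSucc)) < r) → x ∈ C \ Ccoll)
    {Ω : Type*} [MeasurableSpace Ω] (P : Measure Ω) [IsProbabilityMeasure P]
    (X : Fin M × Fin N → Ω → EuclideanSpace ℝ (Fin d))
    (hmeas : ∀ k, Measurable (X k))
    (hdist : ∀ k, Measure.map (X k) P = (volume C)⁻¹ • volume.restrict C)
    (hindep : iIndepFun X P) :
    ENNReal.ofReal
        (1 - (M : ℝ) * Real.exp
          (-(((volume (Metric.ball (0 : EuclideanSpace ℝ (Fin d)) 1)).toReal *
            r ^ d / (volume C).toReal) * N))) ≤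
      P {ω | ∃ σ : Fin M → Fin N, ∀ m : Fin (M + 1), ∀ s ∈ Set.Icc (0 : ℝ) 1,
          pathPts q0 goal (fun i => X (i, σ i) ω) m.castSucc +
            s • (pathPts q0 goal (fun i => X (i, σ i) ω) m.succ -
              pathPts q0 goal (fun i => X (i, σ i) ω) m.castSucc) ∉ Ccoll} := by
  classical
  set α : ℝ := (volume (Metric.ball (0 : EuclideanSpace ℝ (Fin d)) 1)).toReal with hα
  -- middle breakpoints and balls
  set c : Fin M → EuclideanSpace ℝ (Fin d) := fun m => p ⟨m.1 + 1, by omega⟩ with hc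
  set B : Fin M → Set (EuclideanSpace ℝ (Fin d)) := fun m => Metric.ball (c m) r with hB
  have hBC : ∀ m, B m ⊆ C := by
    intro m x hx
    refine (hmargin x ⟨⟨m.1, by omega⟩, 1, ⟨zero_le_one, le_rfl⟩, ?_⟩).1
    have h1 : ((⟨m.1, by omega⟩ : Fin (M + 1)).succ : Fin (M + 2)) =
        (⟨m.1 + 1, by omega⟩ : Fin (M + 2)) := rfl
    have h2 : p (⟨m.1, by omega⟩ : Fin (M + 1)).castSucc + (1 : ℝ) •
        (p ((⟨m.1, by omega⟩ : Fin (M + 1)).succ) -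
          p (⟨m.1, by omega⟩ : Fin (M + 1)).castSucc) = c m := by
      rw [one_smul, h1]
      show _ + (c m - _) = c m
      abel
    rw [h2]
    exact Metric.mem_ball.mp hx
  -- good events
  set EV : Fin M → Set Ω := fun m => ⋃ j : Fin N, (X (m, j)) ⁻¹' (B m) with hEV
  have hBmeas : ∀ m, MeasurableSet (B m) := fun m => measurableSet_ball
  have hEVmeas : ∀ m, MeasurableSet (EV m) :=
    fun m => MeasurableSet.iUnion fun j => (hBmeas m).preimage (hmeas (m, j))
  -- deterministic inclusion
  have hsub : (⋂ m, EV m) ⊆ {ω | ∃ σ : Fin M → Fin N, ∀ m : Fin (M + 1), ∀ s ∈ Set.Icc (0 : ℝ) 1,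
      pathPts q0 goal (fun i => X (i, σ i) ω) m.castSucc +
        s • (pathPts q0 goal (fun i => X (i, σ i) ω) m.succ -
          pathPts q0 goal (fun i => X (i, σ i) ω) m.castSucc) ∉ Ccoll} := by
    intro ω hω
    simp only [Set.mem_iInter, hEV, Set.mem_iUnion] at hω
    choose σ hσ using hω
    refine ⟨σ, ?_⟩
    intro m s hs
    set Y : Fin M → EuclideanSpace ℝ (Fin d) := fun i => X (i, σ i) ω with hY
    set Q : Fin (M + 2) → EuclideanSpace ℝ (Fin d) := pathPts q0 goal Y with hQ
    have hclose : ∀ k : Fin (M + 2), dist (Q k) (p k) < r := by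
      intro k
      refine Fin.cases ?_ ?_ k
      · simp [hQ, pathPts, hp0, hr]
      · intro j
        refine Fin.lastCases ?_ ?_ j
        · have h0 : Q (Fin.last M).succ = goal := by
            simp only [hQ, pathPts, Fin.cons_succ, Fin.snoc_last]
          have h0' : p (Fin.last M).succ = goal := by rw [Fin.succ_last, hpl]
          rw [h0, h0', dist_self]
          exact hr
        · intro i
          have h1 : Q i.castSucc.succ = Y i := by
            simp [hQ, pathPts, Fin.cons_succ, Fin.snoc_castSucc]
          have h2 : p i.castSucc.succ = c i := by
            have : (i.castSucc.succ : Fin (M + 2)) = ⟨i.1 + 1, by omega⟩ := by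
              ext; simp
            rw [this]
          rw [h1, h2]
          exact Metric.mem_ball.mp (hσ i)
    have hlt : dist (Q m.castSucc + s • (Q m.succ - Q m.castSucc))
        (p m.castSucc + s • (p m.succ - p m.castSucc)) < r :=
      seg_dist_lt (hclose m.castSucc) (hclose m.succ) hs.1 hs.2
    exact (hmargin _ ⟨m, s, hs, hlt⟩).2
  -- probability computations
  have hCne : volume C ≠ 0 := by
    intro h; rw [h] at hC0; simp at hC0
  have hCtop : volume C ≠ ⊤ := by
    intro h; rw [h] at hC0; simp at hC0
  set qR : ℝ := α * r ^ d / (volume C).toReal with hqR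
  have hvB : ∀ m, volume (B m) = ENNReal.ofReal (r ^ d) * volume (Metric.ball (0 : EuclideanSpace ℝ (Fin d)) 1) := by
    intro m
    simpa [finrank_euclideanSpace_fin] using
      Measure.addHaar_ball_of_pos (volume : Measure (EuclideanSpace ℝ (Fin d))) (c m) hr
  have hqE : ∀ m, (volume C)⁻¹ * volume (B m) = ENNReal.ofReal qR := by
    intro m
    have hfin : (volume C)⁻¹ * volume (B m) ≠ ⊤ := by
      refine ENNReal.mul_ne_top (by simp [hCne]) ?_
      rw [hvB m]
      exact ENNReal.mul_ne_top ENNReal.ofReal_ne_top measure_ball_lt_top.ne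
    rw [← ENNReal.ofReal_toReal hfin]
    congr 1
    rw [ENNReal.toReal_mul, ENNReal.toReal_inv, hvB m, ENNReal.toReal_mul,
      ENNReal.toReal_ofReal (by positivity), hqR]
    field_simp [hα]
    ring
  -- single-sample complement probability
  have hsingle : ∀ m (j : Fin N), P (X (m, j) ⁻¹' (B m)ᶜ) ≤ ENNReal.ofReal (Real.exp (-qR)) := by
    intro m j
    have hpre : P (X (m, j) ⁻¹' (B m)) = ENNReal.ofReal qR := by
      rw [← Measure.map_apply (hmeas (m, j)) (hBmeas m), hdist (m, j),
        Measure.smul_apply, Measure.restrict_apply (hBmeas m),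
        Set.inter_eq_left.mpr (hBC m), smul_eq_mul]
      exact hqE m
    have hcompl : P (X (m, j) ⁻¹' (B m)ᶜ) = 1 - ENNReal.ofReal qR := by
      rw [Set.preimage_compl, prob_compl_eq_one_sub ((hBmeas m).preimage (hmeas (m, j))), hpre]
    rw [hcompl]
    calc (1 : ENNReal) - ENNReal.ofReal qR = ENNReal.ofReal 1 - ENNReal.ofReal qR := by
          rw [ENNReal.ofReal_one]
      _ = ENNReal.ofReal (1 - qR) := (ENNReal.ofReal_sub 1 (by positivity)).symm
      _ ≤ ENNReal.ofReal (Real.exp (-qR)) := by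
          apply ENNReal.ofReal_le_ofReal
          linarith [Real.add_one_le_exp (-qR)]
  -- per-layer failure probability
  have hlayer : ∀ m, P (EV m)ᶜ ≤ ENNReal.ofReal (Real.exp (-(qR * N))) := by
    intro m
    have hcompl : (EV m)ᶜ = ⋂ j : Fin N, X (m, j) ⁻¹' (B m)ᶜ := by
      simp [hEV, Set.compl_iUnion, Set.preimage_compl]
    set S : Finset (Fin M × Fin N) :=
      Finset.univ.map ⟨fun j => (m, j), fun a b h => by simpa using congrArg Prod.snd h⟩ with hS
    have hmul := hindep.measure_inter_preimage_eq_mul S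
      (sets := fun k => (B k.1)ᶜ) (fun i _ => (hBmeas i.1).compl)
    have hset : (⋂ i ∈ S, X i ⁻¹' (B i.1)ᶜ) = ⋂ j : Fin N, X (m, j) ⁻¹' (B m)ᶜ := by
      ext ω
      simp [hS]
      exact Iff.rfl
    rw [hcompl, ← hset, hmul, hS, Finset.prod_map]
    calc ∏ j : Fin N, P (X (m, j) ⁻¹' (B m)ᶜ)
        ≤ ∏ _j : Fin N, ENNReal.ofReal (Real.exp (-qR)) :=
          Finset.prod_le_prod' fun j _ => hsingle m j
      _ = ENNReal.ofReal (Real.exp (-qR)) ^ N := by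
          rw [Finset.prod_const, Finset.card_univ, Fintype.card_fin]
      _ = ENNReal.ofReal (Real.exp (-qR) ^ N) := by
          rw [ENNReal.ofReal_pow (Real.exp_nonneg _)]
      _ = ENNReal.ofReal (Real.exp (-(qR * N))) := by
          rw [← Real.exp_nat_mul]
          ring_nf
  -- union bound
  have hG : MeasurableSet (⋂ m, EV m) := MeasurableSet.iInter hEVmeas
  have hunion : P (⋂ m, EV m)ᶜ ≤ ENNReal.ofReal ((M : ℝ) * Real.exp (-(qR * N))) := by
    rw [Set.compl_iInter]
    calc P (⋃ m, (EV m)ᶜ) ≤ ∑' m : Fin M, P (EV m)ᶜ := measure_iUnion_le _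
      _ ≤ ∑' _m : Fin M, ENNReal.ofReal (Real.exp (-(qR * N))) :=
          ENNReal.tsum_le_tsum fun m => hlayer m
      _ = (M : ENNReal) * ENNReal.ofReal (Real.exp (-(qR * N))) := by
          rw [tsum_fintype, Finset.sum_const, Finset.card_univ, Fintype.card_fin, nsmul_eq_mul]
      _ = ENNReal.ofReal ((M : ℝ) * Real.exp (-(qR * N))) := by
          rw [ENNReal.ofReal_mul (Nat.cast_nonneg M), ENNReal.ofReal_natCast]
  -- assemble
  calc ENNReal.ofReal (1 - (M : ℝ) * Real.exp (-(α * r ^ d / (volume C).toReal * N)))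
      = 1 - ENNReal.ofReal ((M : ℝ) * Real.exp (-(qR * N))) := by
        rw [ENNReal.ofReal_sub 1 (by positivity), ENNReal.ofReal_one, hqR]
    _ ≤ 1 - P (⋂ m, EV m)ᶜ := tsub_le_tsub le_rfl hunion
    _ ≤ P (⋂ m, EV m) := by
        rw [tsub_le_iff_right, ← measure_univ (μ := P), ← Set.union_compl_self (⋂ m, EV m)]
        exact measure_union_le _ _
    _ ≤ _ := measure_mono hsub
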